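/- arXiv:2412.07935 — 2 statements merged into one kernel-verified Lean document; each statement's English description precedes it below -/
import Mathlib

section
/- Let x_0, x_1, ..., x_n be a structured random walk on ℝ with linear drift f(x, t) = β(t)·x, i.e. x_{k+1} = x_k + β(t_k)·x_k·Δt + g(t_k)·√Δt·z_k, where x_0 ∈ ℝ is deterministic, t_k = k/n, Δt = 1/n, and z_0, ..., z_{n−1} are independent square-integrable real random variables with E[z_k] = 0 and Var(z_k) = 1, each z_k independent of (x_0, ..., x_k). Then for every k ≤ n, Var(x_k) = ∑_{j=0}^{k−1} ( ∏_{i=j+1}^{k−1} (1 + β(t_i)·Δt)² ) · g(t_j)² · Δt. -/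
open MeasureTheory ProbabilityTheory Finset

lemma indep_mono_left' {Ω : Type*} [MeasurableSpace Ω] {P : Measure Ω}
    {m₁ m₁' m₂ : MeasurableSpace Ω} (h : ProbabilityTheory.Indep m₁ m₂ P) (hle : m₁' ≤ m₁) :
    ProbabilityTheory.Indep m₁' m₂ P := by
  intro t1 t2 ht1 ht2
  exact h t1 t2 (hle _ ht1) ht2

/-- **Variance of a structured random walk with linear drift.**
For a structured random walk `x_{k+1} = x_k + β(t_k)·x_k·Δt + g(t_k)·√Δt·z_k` on the
uniform grid `t_k = k/n`, `Δt = 1/n`, starting at a deterministic `x₀`, with independent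
square-integrable noises `z_k` of mean 0 and variance 1, each independent of
`(x_0, …, x_k)`, we have
`Var(x_k) = ∑_{j=0}^{k-1} (∏_{i=j+1}^{k-1} (1 + β(t_i)·Δt)²) · g(t_j)² · Δt` for `k ≤ n`. -/
theorem structured_random_walk_variance
    {Ω : Type*} [MeasurableSpace Ω] (P : Measure Ω) [IsProbabilityMeasure P]
    (n : ℕ) (hn : 0 < n) (β g : ℝ → ℝ) (x0 : ℝ)
    (x z : ℕ → Ω → ℝ)
    (hx0 : x 0 = fun _ => x0)
    (hrec : ∀ k < n, x (k + 1) = fun ω =>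
      x k ω + β ((k : ℝ) / n) * x k ω * (1 / n)
        + g ((k : ℝ) / n) * Real.sqrt (1 / n) * z k ω)
    (hz_meas : ∀ k < n, Measurable (z k))
    (hzL2 : ∀ k < n, MemLp (z k) 2 P)
    (hz_mean : ∀ k < n, ∫ ω, z k ω ∂P = 0)
    (hz_var : ∀ k < n, variance (z k) P = 1)
    (hz_indep : iIndepFun (fun i : Fin n => z i) P)
    (hz_x : ∀ k < n,
      Indep (⨆ i ≤ k, MeasurableSpace.comap (x i) inferInstance)
        (MeasurableSpace.comap (z k) inferInstance) P) :
    ∀ k ≤ n, variance (x k) P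
      = ∑ j ∈ Finset.range k,
          (∏ i ∈ Finset.Ico (j + 1) k, (1 + β ((i : ℝ) / n) * (1 / n)) ^ 2)
            * g ((j : ℝ) / n) ^ 2 * (1 / n) := by
  -- L² bound on x k, by induction
  have hxL2 : ∀ k ≤ n, MemLp (x k) 2 P := by
    intro k
    induction k with
    | zero => intro _; rw [hx0]; exact memLp_const x0
    | succ k ih =>
      intro hk
      have hkn : k < n := hk
      have hxk := ih hkn.le
      rw [hrec k hkn]
      have h1 : MemLp (fun ω => β ((k : ℝ) / n) * x k ω * (1 / n)) 2 P := by
        simpa [mul_comm, mul_assoc, mul_left_comm] using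
          (hxk.const_mul (β ((k : ℝ) / n) * (1 / n)))
      have h2 : MemLp (fun ω => g ((k : ℝ) / n) * Real.sqrt (1 / n) * z k ω) 2 P :=
        (hzL2 k hkn).const_mul _
      exact (hxk.add h1).add h2
  intro k
  induction k with
  | zero =>
    intro _
    rw [hx0, variance_eq_sub (memLp_const x0)]
    simp
  | succ k ih =>
    intro hk
    have hkn : k < n := hk
    have IH := ih hkn.le
    set a : ℝ := 1 + β ((k : ℝ) / n) * (1 / n) with ha
    set c : ℝ := g ((k : ℝ) / n) * Real.sqrt (1 / n) with hc
    -- rewrite the recursion as a • x k + c • z k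
    have hx' : x (k + 1) = (fun ω => a * x k ω) + (fun ω => c * z k ω) := by
      rw [hrec k hkn]
      funext ω
      simp only [Pi.add_apply, ha, hc]
      ring
    -- independence of x k and z k
    have hIndep : IndepFun (x k) (z k) P := by
      have hle : MeasurableSpace.comap (x k) inferInstance
          ≤ ⨆ i ≤ k, MeasurableSpace.comap (x i) (inferInstance : MeasurableSpace ℝ) :=
        le_iSup₂ (f := fun i (_ : i ≤ k) =>
          MeasurableSpace.comap (x i) inferInstance) k le_rfl
      exact indep_mono_left' (hz_x k hkn) hle
    have hIndep2 : IndepFun (fun ω => a * x k ω) (fun ω => c * z k ω) P :=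
      hIndep.comp (measurable_const_mul a) (measurable_const_mul c)
    have hax : MemLp (fun ω => a * x k ω) 2 P := (hxL2 k hkn.le).const_mul a
    have hcz : MemLp (fun ω => c * z k ω) 2 P := (hzL2 k hkn).const_mul c
    have hvar : variance (x (k + 1)) P
        = a ^ 2 * variance (x k) P + c ^ 2 * variance (z k) P := by
      rw [hx', hIndep2.variance_add hax hcz, variance_const_mul, variance_const_mul]
    have hc2 : c ^ 2 = g ((k : ℝ) / n) ^ 2 * (1 / n) := by
      rw [hc, mul_pow, Real.sq_sqrt (by positivity : (0:ℝ) ≤ 1 / n)]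
    rw [hvar, IH, hz_var k hkn, mul_one, hc2]
    rw [Finset.sum_range_succ, Finset.Ico_self, Finset.prod_empty, one_mul,
      Finset.mul_sum]
    congr 1
    refine Finset.sum_congr rfl fun j hj => ?_
    have hjk : j + 1 ≤ k := Finset.mem_range.mp hj
    rw [Finset.prod_Ico_succ_top hjk]
    ring
end

section
/- Let p be the density of the Laplace(μ_1, b_1) distribution and q the density of the Laplace(μ_2, b_2) distribution, with b_1, b_2 > 0. Then the cross-entropy satisfies −∫_ℝ p(x)·log q(x) dx = |μ_2 − μ_1|/b_2 + (b_1/b_2)·exp(−|μ_2 − μ_1|/b_1) + log(2·b_2). -/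
open MeasureTheory Real Set Filter

lemma tendsto_aux (b : ℝ) (hb : 0 < b) (c d : ℝ) :
    Tendsto (fun x : ℝ => (c * x + d) * Real.exp (-x / b)) atTop (nhds 0) := by
  have h1 : Tendsto (fun x : ℝ => x / b) atTop atTop :=
    tendsto_id.atTop_div_const hb
  have h2 : Tendsto (fun x : ℝ => (x / b) * Real.exp (-(x / b))) atTop (nhds 0) := by
    have := (Real.tendsto_pow_mul_exp_neg_atTop_nhds_zero 1).comp h1
    simpa [Function.comp_def] using this
  have h3 : Tendsto (fun x : ℝ => Real.exp (-(x / b))) atTop (nhds 0) :=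
    Real.tendsto_exp_neg_atTop_nhds_zero.comp h1
  have h4 := (h2.const_mul (c * b)).add (h3.const_mul d)
  simp only [mul_zero, add_zero] at h4
  refine h4.congr (fun x => ?_)
  have hb' : b ≠ 0 := ne_of_gt hb
  rw [neg_div]
  field_simp

lemma exp_deriv_aux (b : ℝ) (hb : 0 < b) (x : ℝ) :
    HasDerivAt (fun y : ℝ => Real.exp (-y / b)) (Real.exp (-x / b) * (-1 / b)) x := by
  have h1 : HasDerivAt (fun y : ℝ => -y / b) (-1 / b) x :=
    ((hasDerivAt_id x).neg).div_const b
  exact h1.exp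

lemma lemL (b : ℝ) (hb : 0 < b) (a c : ℝ) (h : 0 ≤ a + c) :
    IntegrableOn (fun x => (x + c) * Real.exp (-x / b)) (Ioi a) ∧
    ∫ x in Ioi a, (x + c) * Real.exp (-x / b) = b * (a + c + b) * Real.exp (-a / b) := by
  have hb' : b ≠ 0 := ne_of_gt hb
  have hderiv : ∀ x ∈ Ici a, HasDerivAt (fun y => -b * (y + c + b) * Real.exp (-y / b))
      ((x + c) * Real.exp (-x / b)) x := by
    intro x _
    have h3 : HasDerivAt (fun y : ℝ => -b * (y + c + b)) (-b) x := by
      have := (((hasDerivAt_id x).add_const c).add_const b).const_mul (-b)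
      simpa using this
    have := h3.fun_mul (exp_deriv_aux b hb x)
    convert! this using 1
    field_simp
    ring
  have hpos : ∀ x ∈ Ioi a, 0 ≤ (x + c) * Real.exp (-x / b) := fun x hx =>
    mul_nonneg (by have := hx.out; linarith) (Real.exp_nonneg _)
  have htend : Tendsto (fun y => -b * (y + c + b) * Real.exp (-y / b)) atTop (nhds 0) := by
    refine (tendsto_aux b hb (-b) (-b * (c + b))).congr (fun x => ?_)
    ring
  constructor
  · exact integrableOn_Ioi_deriv_of_nonneg' hderiv hpos htend
  · rw [integral_Ioi_of_hasDerivAt_of_nonneg' hderiv hpos htend]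
    ring

lemma lemL0 (b : ℝ) (hb : 0 < b) (a : ℝ) :
    IntegrableOn (fun x => Real.exp (-x / b)) (Ioi a) ∧
    ∫ x in Ioi a, Real.exp (-x / b) = b * Real.exp (-a / b) := by
  have hderiv : ∀ x ∈ Ici a, HasDerivAt (fun y => -b * Real.exp (-y / b))
      (Real.exp (-x / b)) x := by
    intro x _
    have := (exp_deriv_aux b hb x).const_mul (-b)
    convert! this using 1
    field_simp
  have hpos : ∀ x ∈ Ioi a, 0 ≤ Real.exp (-x / b) := fun x _ => Real.exp_nonneg _
  have htend : Tendsto (fun y => -b * Real.exp (-y / b)) atTop (nhds 0) := by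
    refine (tendsto_aux b hb 0 (-b)).congr (fun x => ?_)
    ring
  constructor
  · exact integrableOn_Ioi_deriv_of_nonneg' hderiv hpos htend
  · rw [integral_Ioi_of_hasDerivAt_of_nonneg' hderiv hpos htend]
    ring

lemma lemMid (b : ℝ) (hb : 0 < b) (t : ℝ) (ht : 0 ≤ t) :
    ∫ x in (0:ℝ)..t, (t - x) * Real.exp (-x / b)
      = b ^ 2 * Real.exp (-t / b) - b ^ 2 + t * b := by
  have hb' : b ≠ 0 := ne_of_gt hb
  have hderiv : ∀ x ∈ uIcc (0:ℝ) t, HasDerivAt (fun y => b * (y + b - t) * Real.exp (-y / b))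
      ((t - x) * Real.exp (-x / b)) x := by
    intro x _
    have h3 : HasDerivAt (fun y : ℝ => b * (y + b - t)) b x := by
      have := (((hasDerivAt_id x).add_const b).sub_const t).const_mul b
      simpa using this
    have := h3.fun_mul (exp_deriv_aux b hb x)
    convert! this using 1
    field_simp
    ring
  have hint : IntervalIntegrable (fun x => (t - x) * Real.exp (-x / b)) volume 0 t := by
    apply Continuous.intervalIntegrable
    exact (continuous_const.sub continuous_id).mul ((continuous_id.neg.div_const b).rexp)
  rw [intervalIntegral.integral_eq_sub_of_hasDerivAt hderiv hint]
  simp only [neg_zero, zero_div, Real.exp_zero]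
  ring

lemma laplace_key (b t : ℝ) (hb : 0 < b) (ht : 0 ≤ t) :
    Integrable (fun x : ℝ => Real.exp (-|x| / b) * |x - t|) ∧
    ∫ x : ℝ, Real.exp (-|x| / b) * |x - t| = 2 * t * b + 2 * b ^ 2 * Real.exp (-t / b) := by
  set f : ℝ → ℝ := fun x => Real.exp (-|x| / b) * |x - t| with hf
  obtain ⟨hint_t, hval_t⟩ := lemL b hb t (-t) (by linarith)
  obtain ⟨hint_0, hval_0⟩ := lemL b hb 0 t (by linarith)
  have e_t : ∀ x ∈ Ioi t, f x = (x + -t) * Real.exp (-x / b) := by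
    intro x hx
    have hx' : t < x := hx
    have h0 : (0:ℝ) ≤ x := le_of_lt (lt_of_le_of_lt ht hx')
    simp only [hf]
    rw [abs_of_nonneg h0, abs_of_nonneg (by linarith : (0:ℝ) ≤ x - t)]
    ring
  have hf_t : IntegrableOn f (Ioi t) :=
    hint_t.congr_fun (fun x hx => (e_t x hx).symm) measurableSet_Ioi
  have hI_t : ∫ x in Ioi t, f x = b ^ 2 * Real.exp (-t / b) := by
    rw [setIntegral_congr_fun measurableSet_Ioi e_t, hval_t]
    ring
  have e_m : ∀ x ∈ Ioc (0:ℝ) t, f x = (t - x) * Real.exp (-x / b) := by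
    intro x hx
    simp only [hf]
    rw [abs_of_nonneg (le_of_lt hx.1), abs_of_nonpos (by linarith [hx.2] : x - t ≤ 0)]
    ring
  have hcont : Continuous f :=
    ((continuous_abs.neg.div_const b).rexp).mul ((continuous_id.sub continuous_const).abs)
  have hf_m : IntegrableOn f (Ioc 0 t) := hcont.integrableOn_Ioc
  have hI_m : ∫ x in Ioc (0:ℝ) t, f x = b ^ 2 * Real.exp (-t / b) - b ^ 2 + t * b := by
    rw [setIntegral_congr_fun measurableSet_Ioc e_m, ← intervalIntegral.integral_of_le ht]
    exact lemMid b hb t ht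
  have hrefl : ∀ x ∈ Ici (0:ℝ), f (-x) = (x + t) * Real.exp (-x / b) := by
    intro x hx
    have hx' : (0:ℝ) ≤ x := hx
    simp only [hf]
    rw [abs_neg, abs_of_nonneg hx', abs_of_nonpos (by linarith : -x - t ≤ 0)]
    ring
  have hf_iic : IntegrableOn f (Iic 0) := by
    rw [← (Measure.measurePreserving_neg (volume : Measure ℝ)).integrableOn_comp_preimage
        (Homeomorph.neg ℝ).measurableEmbedding]
    simp only [Function.comp_def, neg_preimage, neg_Iic, neg_zero]
    rw [integrableOn_Ici_iff_integrableOn_Ioi]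
    exact hint_0.congr_fun (fun x hx => (hrefl x (Set.mem_Ici.mpr (le_of_lt hx))).symm) measurableSet_Ioi
  have hI_iic : ∫ x in Iic (0:ℝ), f x = b * (t + b) := by
    have h := integral_comp_neg_Iic (0:ℝ) (fun x => f (-x))
    simp only [neg_neg, neg_zero] at h
    rw [h, setIntegral_congr_fun measurableSet_Ioi
      (fun x hx => hrefl x (le_of_lt hx)), hval_0]
    simp
  have hIoi0 : IntegrableOn f (Ioi 0) := by
    rw [← Ioc_union_Ioi_eq_Ioi ht]
    exact hf_m.union hf_t
  constructor
  · rw [← integrableOn_univ, ← Iic_union_Ioi (a := (0:ℝ))]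
    exact hf_iic.union hIoi0
  · have h1 : ∫ x, f x = (∫ x in Iic (0:ℝ), f x) + ∫ x in Ioi (0:ℝ), f x :=
      (intervalIntegral.integral_Iic_add_Ioi hf_iic hIoi0).symm
    have h2 : ∫ x in Ioi (0:ℝ), f x = (∫ x in Ioc (0:ℝ) t, f x) + ∫ x in Ioi t, f x := by
      rw [← setIntegral_union (Ioc_disjoint_Ioi le_rfl) measurableSet_Ioi hf_m hf_t,
        Ioc_union_Ioi_eq_Ioi ht]
    rw [h1, h2, hI_iic, hI_m, hI_t]
    ring

lemma exp_abs_key (b : ℝ) (hb : 0 < b) :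
    Integrable (fun x : ℝ => Real.exp (-|x| / b)) ∧
    ∫ x : ℝ, Real.exp (-|x| / b) = 2 * b := by
  set f : ℝ → ℝ := fun x => Real.exp (-|x| / b) with hf
  obtain ⟨hint, hval⟩ := lemL0 b hb 0
  have e_p : ∀ x ∈ Ioi (0:ℝ), f x = Real.exp (-x / b) := by
    intro x hx
    simp only [hf]
    rw [abs_of_nonneg (le_of_lt hx)]
  have hf_p : IntegrableOn f (Ioi 0) :=
    hint.congr_fun (fun x hx => (e_p x hx).symm) measurableSet_Ioi
  have hrefl : ∀ x : ℝ, f (-x) = f x := by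
    intro x; simp only [hf, abs_neg]
  have hf_iic : IntegrableOn f (Iic 0) := by
    rw [← (Measure.measurePreserving_neg (volume : Measure ℝ)).integrableOn_comp_preimage
        (Homeomorph.neg ℝ).measurableEmbedding]
    simp only [Function.comp_def, neg_preimage, neg_Iic, neg_zero, hrefl]
    rw [integrableOn_Ici_iff_integrableOn_Ioi]
    exact hf_p
  have hI_p : ∫ x in Ioi (0:ℝ), f x = b := by
    rw [setIntegral_congr_fun measurableSet_Ioi e_p, hval]
    simp
  have hI_iic : ∫ x in Iic (0:ℝ), f x = b := by
    have h := integral_comp_neg_Iic (0:ℝ) (fun x => f (-x))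
    simp only [neg_neg, neg_zero] at h
    rw [h, setIntegral_congr_fun measurableSet_Ioi (fun x _ => hrefl x), hI_p]
  constructor
  · rw [← integrableOn_univ, ← Iic_union_Ioi (a := (0:ℝ))]
    exact hf_iic.union hf_p
  · rw [← intervalIntegral.integral_Iic_add_Ioi hf_iic hf_p, hI_iic, hI_p]
    ring

/-- **Cross-entropy between two Laplace distributions.**
For `b₁, b₂ > 0`, with `p` the density of `Laplace(μ₁, b₁)` and `q` the density of
`Laplace(μ₂, b₂)`,
`−∫ p(x)·log q(x) dx = |μ₂ − μ₁|/b₂ + (b₁/b₂)·exp(−|μ₂ − μ₁|/b₁) + log(2b₂)`. -/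
theorem laplace_laplace_cross_entropy (μ₁ μ₂ b₁ b₂ : ℝ) (hb₁ : 0 < b₁) (hb₂ : 0 < b₂) :
    -∫ x : ℝ, (1 / (2 * b₁) * Real.exp (-|x - μ₁| / b₁))
        * Real.log (1 / (2 * b₂) * Real.exp (-|x - μ₂| / b₂))
      = |μ₂ - μ₁| / b₂ + b₁ / b₂ * Real.exp (-|μ₂ - μ₁| / b₁) + Real.log (2 * b₂) := by
  have hb₁' : b₁ ≠ 0 := ne_of_gt hb₁
  have hb₂' : b₂ ≠ 0 := ne_of_gt hb₂
  set c := Real.log (2 * b₂) with hc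
  set a := μ₂ - μ₁ with ha
  set t := |a| with hta
  have ht : 0 ≤ t := abs_nonneg a
  -- step 1 : rewrite the log
  have hlog : ∀ x : ℝ,
      (1 / (2 * b₁) * Real.exp (-|x - μ₁| / b₁))
        * Real.log (1 / (2 * b₂) * Real.exp (-|x - μ₂| / b₂))
      = -(1 / (2 * b₁) * Real.exp (-|x - μ₁| / b₁) * (|x - μ₂| / b₂ + c)) := by
    intro x
    rw [Real.log_mul (by positivity) (Real.exp_ne_zero _), Real.log_exp,
      Real.log_div one_ne_zero (by positivity), Real.log_one, hc]
    ring
  simp only [hlog, integral_neg, neg_neg]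
  -- step 2 : translation
  set g : ℝ → ℝ := fun x => 1 / (2 * b₁) * Real.exp (-|x| / b₁) * (|x - a| / b₂ + c) with hg
  have htrans : (fun x : ℝ => 1 / (2 * b₁) * Real.exp (-|x - μ₁| / b₁) * (|x - μ₂| / b₂ + c))
      = fun x => g (x - μ₁) := by
    funext x
    simp only [hg]
    have h1 : x - μ₁ - a = x - μ₂ := by rw [ha]; ring
    rw [h1]
  rw [htrans, integral_sub_right_eq_self g μ₁]
  -- step 3 : reflection to reduce to t = |a|
  set G : ℝ → ℝ := fun x => 1 / (2 * b₁) * Real.exp (-|x| / b₁) * (|x - t| / b₂ + c) with hG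
  have hgt : ∫ x, g x = ∫ x, G x := by
    rcases abs_cases a with ⟨h1, _⟩ | ⟨h1, _⟩
    · congr 1
      funext x
      simp only [hg, hG, hta, h1]
    · rw [← integral_neg_eq_self g volume]
      congr 1
      funext x
      simp only [hg, hG, hta, h1, abs_neg]
      have h2 : x - -a = -(-x - a) := by ring
      rw [h2, abs_neg]
  rw [hgt]
  -- step 4 : compute
  obtain ⟨hi1, hv1⟩ := laplace_key b₁ t hb₁ ht
  obtain ⟨hi2, hv2⟩ := exp_abs_key b₁ hb₁
  have hGsplit : G = fun x =>
      (1 / (2 * b₁ * b₂)) * (Real.exp (-|x| / b₁) * |x - t|)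
        + (c / (2 * b₁)) * Real.exp (-|x| / b₁) := by
    funext x
    simp only [hG]
    field_simp
  rw [hGsplit, integral_add ((hi1.const_mul _)) ((hi2.const_mul _)),
    integral_const_mul, integral_const_mul, hv1, hv2]
  field_simp
end
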